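/- Let 𝒜 be a C*-algebra and let L be an exponentially positive bounded ℝ-linear operator on 𝒜_sa, i.e. exp(tL) is positive for all t ≥ 0. Then L is cross positive: φ(Lx) ≥ 0 whenever x ∈ (𝒜_sa)_+ and φ is a positive bounded ℝ-linear functional on 𝒜_sa with φ(x) = 0. -/

import Mathlib

open scoped ENNReal

variable {A : Type*} [NonUnitalCStarAlgebra A] [PartialOrder A] [StarOrderedRing A]

noncomputable instance : NormedSpace ℝ (selfAdjoint A) where
  norm_smul_le r x := norm_smul_le r (x : A)

instance : CompleteSpace (selfAdjoint A) :=
  (isClosed_eq continuous_star continuous_id).completeSpace_coe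

/-- A bounded real-linear operator on the self-adjoint part of a C*-algebra is *positive*
if it maps the positive cone into itself. -/
def IsPositiveOp (L : selfAdjoint A →L[ℝ] selfAdjoint A) : Prop :=
  ∀ x : selfAdjoint A, 0 ≤ x → 0 ≤ L x

/-- `L` is *quasi-positive* if `L + α • id` is positive for some `α ≥ 0`. -/
def IsQuasiPositiveOp (L : selfAdjoint A →L[ℝ] selfAdjoint A) : Prop :=
  ∃ α : ℝ, 0 ≤ α ∧ IsPositiveOp (L + α • ContinuousLinearMap.id ℝ (selfAdjoint A))

/-- `L` is *exponentially positive* if `exp (t • L)` is positive for all `t ≥ 0`. -/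
def IsExpPositiveOp (L : selfAdjoint A →L[ℝ] selfAdjoint A) : Prop :=
  ∀ t : ℝ, 0 ≤ t → IsPositiveOp (@NormedSpace.exp _ _ _ (@NonUnitalSeminormedRing.toIsTopologicalRing _
    (ContinuousLinearMap.toNormedRing (𝕜 := ℝ) (E := selfAdjoint A)).toNonUnitalNormedRing.toNonUnitalSeminormedRing)
    (t • L))

/-- `L` is *cross positive* if `φ (L x) ≥ 0` whenever `x ≥ 0` and `φ` is a positive bounded
functional with `φ x = 0`. -/
def IsCrossPositiveOp (L : selfAdjoint A →L[ℝ] selfAdjoint A) : Prop :=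
  ∀ (x : selfAdjoint A) (φ : selfAdjoint A →L[ℝ] ℝ), 0 ≤ x →
    (∀ y : selfAdjoint A, 0 ≤ y → 0 ≤ φ y) → φ x = 0 → 0 ≤ φ (L x)

/-- On the self-adjoint part of a C*-algebra, every exponentially positive bounded real-linear
operator is cross positive. -/
theorem crossPositive_of_expPositive
    (L : selfAdjoint A →L[ℝ] selfAdjoint A) (hL : IsExpPositiveOp L) :
    IsCrossPositiveOp L := by
  intro x φ hx hφ hφx
  letI : IsTopologicalRing (selfAdjoint A →L[ℝ] selfAdjoint A) :=
    @NonUnitalSeminormedRing.toIsTopologicalRing _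
      (ContinuousLinearMap.toNormedRing (𝕜 := ℝ) (E := selfAdjoint A)).toNonUnitalNormedRing.toNonUnitalSeminormedRing
  -- f t = φ (exp (t • L) x)
  set Ψ : (selfAdjoint A →L[ℝ] selfAdjoint A) →L[ℝ] ℝ :=
    φ.comp (ContinuousLinearMap.apply ℝ (selfAdjoint A) x) with hΨ
  set f : ℝ → ℝ := fun t => Ψ (NormedSpace.exp (t • L)) with hf
  have hderiv : HasDerivAt f (φ (L x)) 0 := by
    have h1 : HasDerivAt (fun t : ℝ => NormedSpace.exp (t • L))
        (NormedSpace.exp ((0 : ℝ) • L) * L) 0 := hasDerivAt_exp_smul_const L (0 : ℝ)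
    have h2 := (Ψ.hasFDerivAt.comp_hasDerivAt (F := selfAdjoint A →L[ℝ] selfAdjoint A) (0 : ℝ) h1)
    have : Ψ (NormedSpace.exp ((0 : ℝ) • L) * L) = φ (L x) := by
      have e : NormedSpace.exp ((0:ℝ) • L) = 1 := by
        rw [zero_smul ℝ L]
        exact NormedSpace.exp_zero
      simp [hΨ, ContinuousLinearMap.mul_apply, e]
    rwa [this] at h2
  have hf0 : f 0 = 0 := by
    have e : NormedSpace.exp ((0:ℝ) • L) = 1 := by
      rw [zero_smul ℝ L]
      exact NormedSpace.exp_zero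
    simp [hf, hΨ, hφx, e]
  have hfpos : ∀ t : ℝ, 0 ≤ t → 0 ≤ f t := fun t ht =>
    hφ _ (hL t ht x hx)
  -- derivative from the right of a nonnegative function vanishing at 0
  have hslope : Filter.Tendsto (slope f 0) (nhdsWithin 0 (Set.Ioi 0)) (nhds (φ (L x))) := by
    have := (hderiv.hasDerivWithinAt (s := Set.Ioi 0))
    rw [hasDerivWithinAt_iff_tendsto_slope] at this
    refine this.mono_left (nhdsWithin_mono _ ?_)
    intro t ht
    exact ⟨ht, ne_of_gt ht⟩
  refine le_of_tendsto_of_tendsto tendsto_const_nhds hslope ?_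
  filter_upwards [self_mem_nhdsWithin] with t ht
  have : slope f 0 t = f t / t := by
    simp [slope_def_field, hf0]
  rw [this]
  exact div_nonneg (hfpos t (le_of_lt ht)) (le_of_lt ht)
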